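/- arXiv:1803.05640 — 2 statements merged into one kernel-verified Lean document; each statement's English description precedes it below -/
import Mathlib

section
/- Let L₊ be a positive semidefinite signed-free Laplacian (L₊𝟙 = 0) of a connected graph and let B₋ ∈ ℝ^{n×p} have columns in the range of L₊, with W₋ a positive definite diagonal p×p matrix. Then L₊ − B₋ W₋ B₋^T ⪰ 0 if and only if ‖√W₋ B₋^T L₊^† B₋ √W₋‖₂ ≤ 1. -/
open Matrix
open scoped Matrix.Norms.L2Operator

private lemma dot_sq_norm' {k : ℕ} (v : Fin k → ℝ) :
    v ⬝ᵥ v = ‖(EuclideanSpace.equiv (Fin k) ℝ).symm v‖ ^ 2 := by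
  rw [← real_inner_self_eq_norm_sq]
  simp only [PiLp.inner_apply, dotProduct, RCLike.inner_apply]
  simp

private lemma dot_le_norms' {k : ℕ} (v w : Fin k → ℝ) :
    v ⬝ᵥ w ≤ ‖(EuclideanSpace.equiv (Fin k) ℝ).symm v‖ *
      ‖(EuclideanSpace.equiv (Fin k) ℝ).symm w‖ := by
  have := real_inner_le_norm ((EuclideanSpace.equiv (Fin k) ℝ).symm v)
    ((EuclideanSpace.equiv (Fin k) ℝ).symm w)
  refine le_trans (le_of_eq ?_) this
  simp [PiLp.inner_apply, dotProduct, RCLike.inner_apply]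
  exact Finset.sum_congr rfl fun i _ => mul_comm _ _

private lemma norm_le_one_of' {k l : ℕ} (A : Matrix (Fin k) (Fin l) ℝ)
    (h : ∀ z : Fin l → ℝ, ‖(EuclideanSpace.equiv (Fin k) ℝ).symm (A *ᵥ z)‖ ≤
      ‖(EuclideanSpace.equiv (Fin l) ℝ).symm z‖) : ‖A‖ ≤ 1 := by
  rw [Matrix.l2_opNorm_def]
  refine ContinuousLinearMap.opNorm_le_bound _ zero_le_one fun x => ?_
  rw [one_mul]
  simpa [Matrix.toEuclideanLin_apply] using h ((WithLp.equiv 2 (Fin l → ℝ)) x)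

private lemma mulVec_norm_le' {k l : ℕ} (A : Matrix (Fin k) (Fin l) ℝ) (z : Fin l → ℝ) :
    ‖(EuclideanSpace.equiv (Fin k) ℝ).symm (A *ᵥ z)‖ ≤
      ‖A‖ * ‖(EuclideanSpace.equiv (Fin l) ℝ).symm z‖ := by
  simpa using A.l2_opNorm_mulVec ((WithLp.equiv 2 (Fin l → ℝ)).symm z)

private lemma dot_aux' {k l : ℕ} (A : Matrix (Fin k) (Fin l) ℝ) (z : Fin k → ℝ) (y : Fin l → ℝ) :
    (Aᵀ *ᵥ z) ⬝ᵥ y = z ⬝ᵥ (A *ᵥ y) := by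
  rw [mulVec_transpose, dotProduct_mulVec]

/-- `Lp` satisfies the four Penrose conditions for `L`, i.e. `Lp = L†`. -/
def IsMoorePenrose {n : ℕ} (L Lp : Matrix (Fin n) (Fin n) ℝ) : Prop :=
  L * Lp * L = L ∧ Lp * L * Lp = Lp ∧ (L * Lp)ᵀ = L * Lp ∧ (Lp * L)ᵀ = Lp * L

private lemma mp_unique {n : ℕ} {L M N : Matrix (Fin n) (Fin n) ℝ}
    (hM : IsMoorePenrose L M) (hN : IsMoorePenrose L N) : M = N := by
  obtain ⟨m1, m2, m3, m4⟩ := hM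
  obtain ⟨n1, n2, n3, n4⟩ := hN
  have e1 : L * N = L * M := by
    calc L * N = (L * M * L) * N := by rw [m1]
    _ = (L * M) * (L * N) := by rw [mul_assoc, mul_assoc]
    _ = (L * M)ᵀ * (L * N)ᵀ := by rw [m3, n3]
    _ = ((L * N) * (L * M))ᵀ := by simp [transpose_mul, mul_assoc]
    _ = ((L * N * L) * M)ᵀ := by simp [mul_assoc]
    _ = (L * M)ᵀ := by rw [n1]
    _ = L * M := m3
  have e2 : N * L = M * L := by
    calc N * L = N * (L * M * L) := by rw [m1]
    _ = (N * L) * (M * L) := by simp [mul_assoc]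
    _ = (N * L)ᵀ * (M * L)ᵀ := by rw [m4, n4]
    _ = ((M * L) * (N * L))ᵀ := by simp [transpose_mul, mul_assoc]
    _ = ((M * (L * N * L)))ᵀ := by simp [mul_assoc]
    _ = (M * L)ᵀ := by rw [n1]
    _ = M * L := m4
  calc M = M * L * M := m2.symm
  _ = N * L * M := by rw [e2]
  _ = N * (L * M) := by rw [mul_assoc]
  _ = N * (L * N) := by rw [e1]
  _ = N * L * N := by rw [mul_assoc]
  _ = N := n2

private lemma mp_symm {n : ℕ} {L M : Matrix (Fin n) (Fin n) ℝ}
    (hL : Lᵀ = L) (h : IsMoorePenrose L M) : Mᵀ = M := by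
  obtain ⟨h1, h2, h3, h4⟩ := h
  have hN : IsMoorePenrose L Mᵀ := by
    refine ⟨?_, ?_, ?_, ?_⟩
    · calc L * Mᵀ * L = (Lᵀ * (M * Lᵀ))ᵀ := by simp [transpose_mul, mul_assoc]
      _ = L := by rw [hL, ← mul_assoc, h1, hL]
    · calc Mᵀ * L * Mᵀ = (M * (Lᵀ * M))ᵀ := by simp [transpose_mul, mul_assoc]
      _ = Mᵀ := by rw [hL, ← mul_assoc, h2]
    · calc (L * Mᵀ)ᵀ = M * Lᵀ := by simp [transpose_mul]
      _ = M * L := by rw [hL]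
      _ = (M * L)ᵀ := h4.symm
      _ = Lᵀ * Mᵀ := by simp [transpose_mul]
      _ = L * Mᵀ := by rw [hL]
    · calc (Mᵀ * L)ᵀ = Lᵀ * M := by simp [transpose_mul]
      _ = L * M := by rw [hL]
      _ = (L * M)ᵀ := h3.symm
      _ = Mᵀ * Lᵀ := by simp [transpose_mul]
      _ = Mᵀ * L := by rw [hL]
  exact (mp_unique ⟨h1, h2, h3, h4⟩ hN).symm

open scoped MatrixOrder in
private lemma psd_sqrt_aux {n : ℕ} {A : Matrix (Fin n) (Fin n) ℝ} (h : A.PosSemidef) :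
    ∃ C : Matrix (Fin n) (Fin n) ℝ, C * C = A ∧ C.PosSemidef := by
  have hA : 0 ≤ A := nonneg_iff_posSemidef.mpr h
  exact ⟨CFC.sqrt A, CFC.sqrt_mul_sqrt_self A hA, nonneg_iff_posSemidef.mp (CFC.sqrt_nonneg A)⟩

set_option maxHeartbeats 1000000 in
/-- For a connected-graph PSD Laplacian `L₊` (kernel spanned by `𝟙`), `B₋` with columns
in the range of `L₊`, and `W₋` positive definite diagonal:
`L₊ − B₋W₋B₋ᵀ ⪰ 0` iff `‖√W₋ B₋ᵀ L₊† B₋ √W₋‖₂ ≤ 1`. -/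
theorem stmt_12 {n p : ℕ} (Lplus Ldag : Matrix (Fin n) (Fin n) ℝ)
    (hLplus : Lplus.PosSemidef) (hL1 : Lplus *ᵥ (fun _ => (1 : ℝ)) = 0)
    (hker : ∀ x : Fin n → ℝ, Lplus *ᵥ x = 0 → ∃ c : ℝ, x = fun _ => c)
    (hLdag : IsMoorePenrose Lplus Ldag)
    (Bm : Matrix (Fin n) (Fin p) ℝ)
    (hrange : ∀ c, ∃ x, (fun i => Bm i c) = Lplus *ᵥ x)
    (w : Fin p → ℝ) (hw : ∀ i, 0 < w i) :
    (Lplus - Bm * diagonal w * Bmᵀ).PosSemidef ↔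
      ‖diagonal (fun i => Real.sqrt (w i)) * (Bmᵀ * Ldag * Bm) *
        diagonal (fun i => Real.sqrt (w i))‖ ≤ 1 := by
  classical
  have hLsym : Lplusᵀ = Lplus := by
    have := hLplus.1
    rwa [← conjTranspose_eq_transpose_of_trivial]
  have hdagsym : Ldagᵀ = Ldag := mp_symm hLsym hLdag
  obtain ⟨h1, h2, h3, h4⟩ := hLdag
  set D : Matrix (Fin p) (Fin p) ℝ := diagonal (fun i => Real.sqrt (w i)) with hDdef
  have hDsym : Dᵀ = D := diagonal_transpose _
  have hB : Lplus * Ldag * Bm = Bm := by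
    ext i c
    obtain ⟨x, hx⟩ := hrange c
    have hcol : ∀ j, Bm j c = (Lplus *ᵥ x) j := fun j => congrFun hx j
    calc (Lplus * Ldag * Bm) i c = ((Lplus * Ldag) *ᵥ fun j => Bm j c) i := by
          simp [mul_apply, mulVec, dotProduct]
    _ = ((Lplus * Ldag) *ᵥ (Lplus *ᵥ x)) i := by rw [hx]
    _ = ((Lplus * Ldag * Lplus) *ᵥ x) i := by rw [mulVec_mulVec]
    _ = (Lplus *ᵥ x) i := by rw [h1]
    _ = Bm i c := (hcol i).symm
  have hBT : Bmᵀ * Ldag * Lplus = Bmᵀ := by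
    have := congrArg Matrix.transpose hB
    simp only [transpose_mul, hdagsym, hLsym] at this
    rw [Matrix.mul_assoc]
    exact this
  set T : Matrix (Fin p) (Fin n) ℝ := D * Bmᵀ * Ldag with hTdef
  have hTt : Tᵀ = Ldag * (Bm * D) := by
    rw [hTdef]
    simp [transpose_mul, hdagsym, hDsym, Matrix.mul_assoc]
  have hTL : T * Lplus = D * Bmᵀ := by
    rw [hTdef, Matrix.mul_assoc (D * Bmᵀ) Ldag Lplus, Matrix.mul_assoc D Bmᵀ (Ldag * Lplus),
      ← Matrix.mul_assoc Bmᵀ Ldag Lplus, hBT]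
  set S : Matrix (Fin p) (Fin p) ℝ := D * (Bmᵀ * Ldag * Bm) * D with hSdef
  have hS : T * Lplus * Tᵀ = S := by
    rw [hTL, hTt, hSdef]
    simp [Matrix.mul_assoc]
  have hW : D * D = diagonal w := by
    have hww : (fun i => Real.sqrt (w i) * Real.sqrt (w i)) = w :=
      funext fun i => Real.mul_self_sqrt (hw i).le
    rw [hDdef, diagonal_mul_diagonal, hww]
  have hBW : Bm * diagonal w * Bmᵀ = (Bm * D) * (Bm * D)ᵀ := by
    rw [transpose_mul, hDsym, ← hW]
    simp [Matrix.mul_assoc]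
  have hDBt : (Bm * D)ᵀ = D * Bmᵀ := by rw [transpose_mul, hDsym]
  constructor
  · intro hPSD
    refine norm_le_one_of' S fun z => ?_
    have hx := hPSD.dotProduct_mulVec_nonneg (Tᵀ *ᵥ z)
    rw [star_trivial] at hx
    set x : Fin n → ℝ := Tᵀ *ᵥ z with hxdef
    have hq1 : x ⬝ᵥ (Lplus *ᵥ x) = z ⬝ᵥ (S *ᵥ z) := by
      rw [hxdef, dot_aux', mulVec_mulVec, mulVec_mulVec, hS]
    have hq2 : x ⬝ᵥ ((Bm * diagonal w * Bmᵀ) *ᵥ x) = (S *ᵥ z) ⬝ᵥ (S *ᵥ z) := by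
      have hv : (Bm * D)ᵀ *ᵥ x = S *ᵥ z := by
        rw [hxdef, mulVec_mulVec, hDBt, hTt]
        have : D * Bmᵀ * (Ldag * (Bm * D)) = S := by
          rw [hSdef]; simp [Matrix.mul_assoc]
        rw [this]
      rw [hBW, ← mulVec_mulVec, ← dot_aux' (Bm * D), hv]
    have key : x ⬝ᵥ ((Lplus - Bm * diagonal w * Bmᵀ) *ᵥ x)
        = z ⬝ᵥ (S *ᵥ z) - (S *ᵥ z) ⬝ᵥ (S *ᵥ z) := by
      rw [sub_mulVec, dotProduct_sub, hq1, hq2]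
    rw [key] at hx
    have cs := dot_le_norms' z (S *ᵥ z)
    have hg := dot_sq_norm' (S *ᵥ z)
    have hz := dot_sq_norm' z
    set a := ‖(EuclideanSpace.equiv (Fin p) ℝ).symm (S *ᵥ z)‖ with hadef
    set b := ‖(EuclideanSpace.equiv (Fin p) ℝ).symm z‖ with hbdef
    have ha : 0 ≤ a := norm_nonneg _
    have hb : 0 ≤ b := norm_nonneg _
    nlinarith [hx, cs, hg, ha, hb]
  · intro hnorm
    have hBWsym : (Bm * diagonal w * Bmᵀ).IsHermitian := by
      rw [hBW]
      have := isHermitian_mul_conjTranspose_self (Bm * D)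
      rwa [conjTranspose_eq_transpose_of_trivial] at this
    refine Matrix.PosSemidef.of_dotProduct_mulVec_nonneg (hLplus.1.sub hBWsym) fun x => ?_
    rw [star_trivial]
    obtain ⟨C, hCC, hCpsd⟩ := psd_sqrt_aux hLplus
    have hCsym : Cᵀ = C := by
      have := hCpsd.1
      rwa [← conjTranspose_eq_transpose_of_trivial]
    have hTC : ‖T * C‖ ≤ 1 := by
      have h5 : ((T * C)ᴴ)ᴴ * (T * C)ᴴ = S := by
        rw [conjTranspose_conjTranspose, conjTranspose_eq_transpose_of_trivial,
          transpose_mul, hCsym, ← hS, ← hCC]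
        simp [Matrix.mul_assoc]
      have h6 := Matrix.l2_opNorm_conjTranspose_mul_self ((T * C)ᴴ)
      rw [h5, Matrix.l2_opNorm_conjTranspose] at h6
      nlinarith [norm_nonneg (T * C), h6, hnorm]
    have hq1 : x ⬝ᵥ (Lplus *ᵥ x) = (C *ᵥ x) ⬝ᵥ (C *ᵥ x) := by
      rw [← hCC, ← mulVec_mulVec, ← dot_aux', hCsym]
    have hq2 : x ⬝ᵥ ((Bm * diagonal w * Bmᵀ) *ᵥ x)
        = ((T * C) *ᵥ (C *ᵥ x)) ⬝ᵥ ((T * C) *ᵥ (C *ᵥ x)) := by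
      have hv : (Bm * D)ᵀ *ᵥ x = (T * C) *ᵥ (C *ᵥ x) := by
        rw [hDBt, mulVec_mulVec, Matrix.mul_assoc, hCC, hTL]
      rw [hBW, ← mulVec_mulVec, ← dot_aux' (Bm * D), hv]
    rw [sub_mulVec, dotProduct_sub, hq1, hq2, sub_nonneg]
    have hle := mulVec_norm_le' (T * C) (C *ᵥ x)
    have hg := dot_sq_norm' ((T * C) *ᵥ (C *ᵥ x))
    have hz := dot_sq_norm' (C *ᵥ x)
    rw [hg, hz]
    set a := ‖(EuclideanSpace.equiv (Fin p) ℝ).symm ((T * C) *ᵥ (C *ᵥ x))‖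
    set b := ‖(EuclideanSpace.equiv (Fin n) ℝ).symm (C *ᵥ x)‖
    have ha : 0 ≤ a := norm_nonneg _
    have hb : 0 ≤ b := norm_nonneg _
    have hab : a ≤ b := hle.trans (mul_le_of_le_one_left hb hTC)
    nlinarith [hab, ha, hb]
end

section
/- Let L₊ be the Laplacian of a connected positively weighted graph on n vertices and let e = (e_i − e_j) for distinct vertices i, j, with r = e^T L₊^† e the effective resistance between i and j. Then for w > 0, the signed Laplacian L₊ − w e e^T is positive semidefinite if and only if w ≤ 1/r. -/
open Matrix

/-- Cauchy–Schwarz for a PSD real matrix. -/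
lemma psd_cauchy_schwarz {n : ℕ} (L : Matrix (Fin n) (Fin n) ℝ)
    (hL : L.PosSemidef) (x z : Fin n → ℝ) :
    (x ⬝ᵥ L *ᵥ z) ^ 2 ≤ (x ⬝ᵥ L *ᵥ x) * (z ⬝ᵥ L *ᵥ z) := by
  have hsym : Lᵀ = L := hL.1
  have hxz : z ⬝ᵥ L *ᵥ x = x ⬝ᵥ L *ᵥ z := by
    rw [dotProduct_mulVec, ← mulVec_transpose, hsym, dotProduct_comm]
  have h : ∀ t : ℝ, 0 ≤ (z ⬝ᵥ L *ᵥ z) * (t * t) + (2 * (x ⬝ᵥ L *ᵥ z)) * t + (x ⬝ᵥ L *ᵥ x) := by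
    intro t
    have := hL.dotProduct_mulVec_nonneg (x + t • z)
    simp only [star_trivial, mulVec_add, mulVec_smul, dotProduct_add, add_dotProduct,
      dotProduct_smul, smul_dotProduct, smul_eq_mul] at this
    rw [hxz] at this
    nlinarith [this]
  have := discrim_le_zero h
  rw [discrim] at this
  nlinarith [this]

/-- Single negative edge case: for a connected-graph PSD Laplacian `L₊` (kernel spanned
by `𝟙`), distinct vertices `i ≠ j`, `e = e_i − e_j`, and effective resistance
`r = eᵀL₊†e`, the signed Laplacian `L₊ − w e eᵀ` is PSD iff `w ≤ 1/r`. -/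
theorem stmt_16 {n : ℕ} (Lplus Ldag : Matrix (Fin n) (Fin n) ℝ)
    (hLplus : Lplus.PosSemidef) (hL1 : Lplus *ᵥ (fun _ => (1 : ℝ)) = 0)
    (hker : ∀ x : Fin n → ℝ, Lplus *ᵥ x = 0 → ∃ c : ℝ, x = fun _ => c)
    (hLdag : IsMoorePenrose Lplus Ldag)
    (i j : Fin n) (hij : i ≠ j)
    (e : Fin n → ℝ) (he : e = Pi.single i (1 : ℝ) - Pi.single j 1)
    (r : ℝ) (hr : r = e ⬝ᵥ (Ldag *ᵥ e))
    (w : ℝ) (hw : 0 < w) :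
    (Lplus - w • vecMulVec e e).PosSemidef ↔ w ≤ 1 / r := by
  have hsym : Lplusᵀ = Lplus := hLplus.1
  obtain ⟨h1, h2, h3, h4⟩ := hLdag
  set y : Fin n → ℝ := Ldag *ᵥ e with hy
  -- 𝟙 ⬝ᵥ e = 0
  have hone_e : (fun _ => (1 : ℝ)) ⬝ᵥ e = 0 := by
    subst he
    simp [dotProduct_sub, dotProduct_single]
  -- e = Lplus *ᵥ y
  have hLLd : Lplus * Lplus * Ldag = Lplus := by
    have e1 : Ldagᵀ * Lplus = Lplus * Ldag := by
      calc Ldagᵀ * Lplus = Ldagᵀ * Lplusᵀ := by rw [hsym]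
        _ = (Lplus * Ldag)ᵀ := (transpose_mul _ _).symm
        _ = Lplus * Ldag := h3
    have h5 : (Lplus * Lplus * Ldag)ᵀ = Lplus := by
      rw [transpose_mul, transpose_mul, hsym, ← Matrix.mul_assoc, e1, h1]
    calc Lplus * Lplus * Ldag = ((Lplus * Lplus * Ldag)ᵀ)ᵀ := (transpose_transpose _).symm
      _ = Lplusᵀ := by rw [h5]
      _ = Lplus := hsym
  have hLy : Lplus *ᵥ y = e := by
    have hd : Lplus *ᵥ (e - Lplus *ᵥ y) = 0 := by
      rw [mulVec_sub, hy, mulVec_mulVec, mulVec_mulVec, hLLd, sub_self]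
    obtain ⟨c, hc⟩ := hker _ hd
    have hdot : (fun _ => (1 : ℝ)) ⬝ᵥ (e - Lplus *ᵥ y) = 0 := by
      rw [dotProduct_sub, hone_e, dotProduct_mulVec, ← mulVec_transpose, hsym, hL1]
      simp
    rw [hc] at hdot
    have hn : (n : ℝ) ≠ 0 := Nat.cast_ne_zero.2 (Fin.pos i).ne'
    have hcz : c = 0 := by
      have : (n : ℝ) * c = 0 := by
        simpa [dotProduct, Finset.sum_const, Finset.card_univ] using hdot
      exact (mul_eq_zero.mp this).resolve_left hn
    have : e - Lplus *ᵥ y = 0 := by rw [hc, hcz]; ext k; simp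
    linear_combination (norm := module) -this
  -- r = y ⬝ᵥ Lplus *ᵥ y
  have hry : y ⬝ᵥ Lplus *ᵥ y = r := by
    rw [hLy, hr, hy, dotProduct_comm]
  have hey : e ⬝ᵥ y = r := hr.symm
  have hye : y ⬝ᵥ e = r := by rw [dotProduct_comm]; exact hey
  -- e ≠ 0
  have he_ne : e i = 1 := by
    subst he; simp [Pi.single_apply, hij, hij.symm]
  -- r > 0
  have hr0 : 0 < r := by
    rcases lt_or_eq_of_le (hry ▸ (by simpa using hLplus.dotProduct_mulVec_nonneg y : (0:ℝ) ≤ y ⬝ᵥ Lplus *ᵥ y)) with h | h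
    · exact h
    · exfalso
      -- r = 0 ⇒ Lplus *ᵥ y = 0 ⇒ e = 0, contradiction
      have hz : Lplus *ᵥ y = 0 := by
        have hcs := psd_cauchy_schwarz Lplus hLplus (Lplus *ᵥ y) y
        rw [hry, ← h, mul_zero] at hcs
        have h0 : (Lplus *ᵥ y) ⬝ᵥ (Lplus *ᵥ y) = 0 := by
          have hle : ((Lplus *ᵥ y) ⬝ᵥ Lplus *ᵥ y) ^ 2 ≤ 0 := hcs
          have hnn : 0 ≤ (Lplus *ᵥ y) ⬝ᵥ (Lplus *ᵥ y) :=
          Finset.sum_nonneg fun k _ => mul_self_nonneg _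
          nlinarith
        exact (dotProduct_self_eq_zero).mp h0
      rw [hLy] at hz
      rw [hz] at he_ne
      simp at he_ne
  -- quadratic form identity
  have hform : ∀ x : Fin n → ℝ, x ⬝ᵥ (Lplus - w • vecMulVec e e) *ᵥ x
      = x ⬝ᵥ Lplus *ᵥ x - w * (e ⬝ᵥ x) ^ 2 := by
    intro x
    rw [sub_mulVec, dotProduct_sub]
    congr 1
    have hvv : (vecMulVec e e) *ᵥ x = (e ⬝ᵥ x) • e := by
      ext k
      simp only [vecMulVec_apply, mulVec, dotProduct, Pi.smul_apply, smul_eq_mul]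
      rw [Finset.sum_mul]
      exact Finset.sum_congr rfl fun l _ => by ring
    rw [smul_mulVec, hvv, dotProduct_smul, dotProduct_smul, smul_eq_mul, smul_eq_mul,
      dotProduct_comm x e]
    ring
  constructor
  · intro hpsd
    have := hpsd.dotProduct_mulVec_nonneg y
    rw [star_trivial, hform y, hry] at this
    have hey' : e ⬝ᵥ y = r := hey
    rw [hey'] at this
    -- 0 ≤ r - w * r^2, r > 0 ⇒ w ≤ 1/r
    rw [le_div_iff₀ hr0]
    nlinarith
  · intro hwle
    have hwr : w * r ≤ 1 := by
      rw [le_div_iff₀ hr0] at hwle; linarith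
    refine PosSemidef.of_dotProduct_mulVec_nonneg ?_ ?_
    · have hvv : (vecMulVec e e)ᵀ = vecMulVec e e := by
        ext a b; simp [vecMulVec, transpose_apply, mul_comm]
      have : (Lplus - w • vecMulVec e e)ᵀ = Lplus - w • vecMulVec e e := by
        rw [transpose_sub, transpose_smul, hvv, hsym]
      exact (conjTranspose_eq_transpose_of_trivial _).trans this
    · intro x
      rw [star_trivial, hform x]
      have hex : e ⬝ᵥ x = y ⬝ᵥ Lplus *ᵥ x := by
        rw [← hLy, dotProduct_mulVec, ← mulVec_transpose, hsym]
      have hcs := psd_cauchy_schwarz Lplus hLplus y x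
      rw [hry] at hcs
      have hq : 0 ≤ x ⬝ᵥ Lplus *ᵥ x := by simpa using hLplus.dotProduct_mulVec_nonneg x
      rw [hex]
      nlinarith
end
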